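/- For every TU game v, Φ^{k-SED}(v) = Φ^{ED}(v_{<k}) + Φ^{Sh}(v_{≥k}), where v_{<k}(S) = v(S) for |S| < k and 0 otherwise, and v_{≥k}(S) = v(S) for |S| ≥ k and 0 otherwise. -/
import Mathlib


open Finset

/-- The Shapley value of player `i` in the TU game `v` on player set `Fin n`. -/
noncomputable def shapley (n : ℕ) (v : Finset (Fin n) → ℝ) (i : Fin n) : ℝ :=
  ∑ S ∈ (Finset.univ.erase i).powerset,
      ((S.card.factorial * (n - S.card - 1).factorial : ℝ) / n.factorial) *
        (v (insert i S) - v S)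

/-- The `k`-SED value of player `i` in the TU game `v` on player set `Fin n`. -/
noncomputable def kSED (n k : ℕ) (v : Finset (Fin n) → ℝ) (i : Fin n) : ℝ :=
  (∑ S ∈ ((Finset.univ.erase i).powerset.filter (fun S => S.card = k - 1)),
      (((n - k).factorial * (k - 1).factorial : ℝ) / n.factorial) * v (insert i S))
  + ∑ S ∈ ((Finset.univ.erase i).powerset.filter (fun S => k ≤ S.card)),
      (((n - S.card - 1).factorial * S.card.factorial : ℝ) / n.factorial) *
        (v (insert i S) - v S)

/-- `Φ^{k-SED}(v) = Φ^{ED}(v_{<k}) + Φ^{Sh}(v_{≥k})`. -/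
theorem kSED_eq_ED_add_shapley (n k : ℕ) (hk : 1 ≤ k) (hkn : k ≤ n)
    (v : Finset (Fin n) → ℝ) (hv : v ∅ = 0) (i : Fin n) :
    kSED n k v i =
      (fun S : Finset (Fin n) => if S.card < k then v S else 0) Finset.univ / n
        + shapley n (fun S => if k ≤ S.card then v S else 0) i := by
  simp only [Finset.card_univ, Fintype.card_fin]
  rw [if_neg (by omega), zero_div, zero_add]
  unfold kSED shapley
  rw [Finset.sum_filter, Finset.sum_filter, ← Finset.sum_add_distrib]
  apply Finset.sum_congr rfl
  intro S hS
  have hi : i ∉ S := fun h =>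
    (Finset.mem_erase.mp (Finset.mem_powerset.mp hS h)).1 rfl
  have hcard : (insert i S).card = S.card + 1 := Finset.card_insert_of_notMem hi
  rcases lt_trichotomy S.card (k - 1) with h | h | h
  · simp only [hcard]
    rw [if_neg (by omega), if_neg (by omega), if_neg (by omega), if_neg (by omega)]
    ring
  · simp only [hcard]
    rw [if_pos h, if_neg (by omega), if_pos (by omega), if_neg (by omega)]
    have h1 : n - (k - 1) - 1 = n - k := by omega
    rw [h, h1]
    ring
  · simp only [hcard]
    rw [if_neg (by omega), if_pos (by omega), if_pos (by omega), if_pos (by omega)]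
    ring
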